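/- Hard look-ahead strengthening is not idempotent: there exist an initial gossip graph G and a syntactic protocol P with P^■(G) ≠ (P^■)^■(G). Concretely, for P = LNS and G the 'N' graph on agents {0,1,2,3} with N the reflexive closure of {(3,1),(3,0),(2,0)} and S the identity: the one-call sequence 30 belongs to LNS^■(G) but not to (LNS^■)^■(G); indeed LNS^■(G) = {ε, 30} while (LNS^■)^■(G) = {ε}. -/

import Mathlib

set_option maxHeartbeats 1000000

structure GossipGraph (A : Type) : Type where
  N : A → A → Prop
  S : A → A → Prop
  refl_S : ∀ a, S a a
  S_sub_N : ∀ a b, S a b → N a b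

namespace Gossip

variable {A : Type}

def Initial (G : GossipGraph A) : Prop := ∀ a b, G.S a b ↔ a = b

def doCall (G : GossipGraph A) (c : A × A) : GossipGraph A where
  N x y := G.N x y ∨ ((x = c.1 ∨ x = c.2) ∧ (G.N c.1 y ∨ G.N c.2 y))
  S x y := G.S x y ∨ ((x = c.1 ∨ x = c.2) ∧ (G.S c.1 y ∨ G.S c.2 y))
  refl_S a := Or.inl (G.refl_S a)
  S_sub_N a b h := by
    rcases h with h | ⟨h1, h2 | h2⟩
    · exact Or.inl (G.S_sub_N a b h)
    · exact Or.inr ⟨h1, Or.inl (G.S_sub_N _ _ h2)⟩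
    · exact Or.inr ⟨h1, Or.inr (G.S_sub_N _ _ h2)⟩

def doCalls (G : GossipGraph A) (σ : List (A × A)) : GossipGraph A :=
  σ.foldl doCall G

def PossibleSeq (G : GossipGraph A) : List (A × A) → Prop
  | [] => True
  | c :: σ => c.1 ≠ c.2 ∧ G.N c.1 c.2 ∧ PossibleSeq (doCall G c) σ

mutual
  inductive Form (A : Type) : Type where
    | top : Form A
    | atomN : A → A → Form A
    | atomS : A → A → Form A
    | neg : Form A → Form A
    | conj : Form A → Form A → Form A
    | K : A → (A → A → Form A) → Form A → Form A
    | box : Prog A → Form A → Form A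
  inductive Prog (A : Type) : Type where
    | test : Form A → Prog A
    | call : A → A → Prog A
    | seq : Prog A → Prog A → Prog A
    | cup : Prog A → Prog A → Prog A
    | star : Prog A → Prog A
end

abbrev Protocol (A : Type) := A → A → Form A

inductive Epi (G : GossipGraph A) (perm : List (A × A) → (A × A) → Prop) (a : A) :
    List (A × A) → List (A × A) → Prop where
  | refl : Epi G perm a [] []
  | call_out {σ τ : List (A × A)} {b : A} :
      Epi G perm a σ τ →
      (∀ x, (doCalls G σ).N b x ↔ (doCalls G τ).N b x) →
      (∀ x, (doCalls G σ).S b x ↔ (doCalls G τ).S b x) →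
      perm σ (a, b) → perm τ (a, b) →
      Epi G perm a (σ ++ [(a, b)]) (τ ++ [(a, b)])
  | call_in {σ τ : List (A × A)} {b : A} :
      Epi G perm a σ τ →
      (∀ x, (doCalls G σ).N b x ↔ (doCalls G τ).N b x) →
      (∀ x, (doCalls G σ).S b x ↔ (doCalls G τ).S b x) →
      perm σ (b, a) → perm τ (b, a) →
      Epi G perm a (σ ++ [(b, a)]) (τ ++ [(b, a)])
  | other {σ τ : List (A × A)} {c d e f : A} :
      Epi G perm a σ τ →
      c ≠ a → d ≠ a → e ≠ a → f ≠ a →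
      perm σ (c, d) → perm τ (e, f) →
      Epi G perm a (σ ++ [(c, d)]) (τ ++ [(e, f)])

mutual
  def Sat (G : GossipGraph A) : List (A × A) → Form A → Prop
    | _, Form.top => True
    | σ, Form.atomN a b => (doCalls G σ).N a b
    | σ, Form.atomS a b => (doCalls G σ).S a b
    | σ, Form.neg φ => ¬ Sat G σ φ
    | σ, Form.conj φ ψ => Sat G σ φ ∧ Sat G σ ψ
    | σ, Form.K a P φ =>
        ∀ τ, Epi G (fun ρ c => c.1 ≠ c.2 ∧ (doCalls G ρ).N c.1 c.2 ∧ Sat G ρ (P c.1 c.2)) a τ σ →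
          Sat G τ φ
    | σ, Form.box π φ => ∀ τ, ProgRel G π σ τ → Sat G τ φ
  def ProgRel (G : GossipGraph A) : Prog A → List (A × A) → List (A × A) → Prop
    | Prog.test φ, σ, τ => σ = τ ∧ Sat G σ φ
    | Prog.call a b, σ, τ => a ≠ b ∧ (doCalls G σ).N a b ∧ τ = σ ++ [(a, b)]
    | Prog.seq π π', σ, τ => ∃ ρ, ProgRel G π σ ρ ∧ ProgRel G π' ρ τ
    | Prog.cup π π', σ, τ => ProgRel G π σ τ ∨ ProgRel G π' σ τ
    | Prog.star π, σ, τ => Relation.ReflTransGen (fun x y => ProgRel G π x y) σ τ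
end


/-- A call `ab` is `P`-permitted at `(G, σ)` iff `a ≠ b`, `N^σ a b` and `G,σ ⊨ P_{ab}`. -/
def Permits (G : GossipGraph A) (P : Protocol A) (σ : List (A × A)) (c : A × A) : Prop :=
  c.1 ≠ c.2 ∧ (doCalls G σ).N c.1 c.2 ∧ Sat G σ (P c.1 c.2)

/-- The least set of call sequences containing `ε` and closed under adding permitted calls. -/
inductive Ext (G : GossipGraph A) (perm : List (A × A) → (A × A) → Prop) : List (A × A) → Prop where
  | nil : Ext G perm []
  | snoc {σ : List (A × A)} {c : A × A} : Ext G perm σ → perm σ c → Ext G perm (σ ++ [c])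

/-- The extension of a syntactic protocol `P` on an (initial) gossip graph `G`. -/
def extension (P : Protocol A) (G : GossipGraph A) : Set (List (A × A)) :=
  { σ | Ext G (Permits G P) σ }

/-- A formula is valid iff it is true at every gossip state, i.e. at every pair of an
initial gossip graph and a call sequence possible on it. -/
def Valid (φ : Form A) : Prop :=
  ∀ G : GossipGraph A, Initial G → ∀ σ : List (A × A), PossibleSeq G σ → Sat G σ φ

def impF (φ ψ : Form A) : Form A := Form.neg (Form.conj φ (Form.neg ψ))
def orF (φ ψ : Form A) : Form A := Form.neg (Form.conj (Form.neg φ) (Form.neg ψ))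
def iffF (φ ψ : Form A) : Form A := Form.conj (impF φ ψ) (impF ψ φ)
/-- The epistemic "possibility" dual `K̂ := ¬K¬`. -/
def hatK (a : A) (P : Protocol A) (φ : Form A) : Form A := Form.neg (Form.K a P (Form.neg φ))

/-- A semantic protocol, as raw data: a map from (initial) gossip graphs to sets of call
sequences. -/
abbrev RawSem (A : Type) := GossipGraph A → Set (List (A × A))

/-- For a semantic protocol, a call `c` is permitted at `(G,σ)` iff `σ;c ∈ P(G)`. -/
def semPerm (Q : RawSem A) (G : GossipGraph A) (σ : List (A × A)) (c : A × A) : Prop :=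
  σ ++ [c] ∈ Q G

/-- `σ` is terminal (in `Q(G)`) iff no further call is permitted. -/
def TerminalIn (Q : RawSem A) (G : GossipGraph A) (σ : List (A × A)) : Prop :=
  ∀ c : A × A, σ ++ [c] ∉ Q G

/-- All agents are experts: everyone knows all secrets. -/
def AllExpert (G : GossipGraph A) : Prop := ∀ a b : A, G.S a b

/-- A semantic protocol: assigns to each initial gossip graph a set of call sequences
possible on it, containing the empty sequence and closed under prefixes. -/
structure SemProtocol (A : Type) : Type where
  ext : GossipGraph A → Set (List (A × A))
  nil_mem : ∀ G : GossipGraph A, Initial G → [] ∈ ext G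
  prefix_closed : ∀ G : GossipGraph A, Initial G → ∀ σ c, σ ++ [c] ∈ ext G → σ ∈ ext G
  possible : ∀ G : GossipGraph A, Initial G → ∀ σ ∈ ext G, PossibleSeq G σ

/-- A semantic protocol is epistemic iff a call `ab` is permitted at `(G,σ)` exactly when it
is permitted at all states that agent `a` cannot distinguish from `(G,σ)`. -/
def SemEpistemic (Q : RawSem A) : Prop :=
  ∀ G : GossipGraph A, Initial G → ∀ σ ∈ Q G, ∀ a b : A, a ≠ b →
    (σ ++ [(a, b)] ∈ Q G ↔ ∀ τ, Epi G (semPerm Q G) a τ σ → τ ++ [(a, b)] ∈ Q G)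

/-- Relabelling the agents of a gossip graph along a permutation. -/
def mapGraph (J : Equiv.Perm A) (G : GossipGraph A) : GossipGraph A where
  N x y := G.N (J.symm x) (J.symm y)
  S x y := G.S (J.symm x) (J.symm y)
  refl_S a := G.refl_S _
  S_sub_N a b h := G.S_sub_N _ _ h

/-- Relabelling a call sequence, callwise. -/
def mapSeq (J : Equiv.Perm A) (σ : List (A × A)) : List (A × A) :=
  σ.map (fun c => (J c.1, J c.2))

mutual
  /-- Relabelling the agents in a formula along a permutation. -/
  def mapForm (J : Equiv.Perm A) : Form A → Form A
    | Form.top => Form.top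
    | Form.atomN a b => Form.atomN (J a) (J b)
    | Form.atomS a b => Form.atomS (J a) (J b)
    | Form.neg φ => Form.neg (mapForm J φ)
    | Form.conj φ ψ => Form.conj (mapForm J φ) (mapForm J ψ)
    | Form.K a P φ => Form.K (J a) (fun x y => mapForm J (P (J.symm x) (J.symm y))) (mapForm J φ)
    | Form.box π φ => Form.box (mapProg J π) (mapForm J φ)
  /-- Relabelling the agents in a program along a permutation. -/
  def mapProg (J : Equiv.Perm A) : Prog A → Prog A
    | Prog.test φ => Prog.test (mapForm J φ)
    | Prog.call a b => Prog.call (J a) (J b)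
    | Prog.seq π π' => Prog.seq (mapProg J π) (mapProg J π')
    | Prog.cup π π' => Prog.cup (mapProg J π) (mapProg J π')
    | Prog.star π => Prog.star (mapProg J π)
end

/-- A semantic protocol is symmetric iff it commutes with relabelling of the agents. -/
def SemSymmetric (Q : RawSem A) : Prop :=
  ∀ (J : Equiv.Perm A) (G : GossipGraph A), Initial G →
    Q (mapGraph J G) = mapSeq J '' Q G

def listConj (l : List (Form A)) : Form A := l.foldr Form.conj Form.top
def listDisj (l : List (Form A)) : Form A := l.foldr orF (Form.neg Form.top)

noncomputable def pairsList (A : Type) [Fintype A] : List (A × A) := (Finset.univ : Finset (A × A)).toList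
noncomputable def distinctPairs (A : Type) [Fintype A] [DecidableEq A] : List (A × A) :=
  (pairsList A).filter (fun c => decide (c.1 ≠ c.2))

/-- The formula `Ex`: all agents are experts. -/
noncomputable def ExForm (A : Type) [Fintype A] : Form A :=
  listConj ((pairsList A).map (fun c => Form.atomS c.1 c.2))

/-- `Ex ∨ ⋁_{i≠j} (N_ij ∧ P_ij)`. -/
noncomputable def oneStepBody (A : Type) [Fintype A] [DecidableEq A] (P : Protocol A) : Form A :=
  orF (ExForm A) (listDisj ((distinctPairs A).map (fun c => Form.conj (Form.atomN c.1 c.2) (P c.1 c.2))))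

/-- Hard one-step strengthening: `P_ab ∧ K_a^P [ab](Ex ∨ ⋁_{i≠j}(N_ij ∧ P_ij))`. -/
noncomputable def hardOneStep {A : Type} [Fintype A] [DecidableEq A] (P : Protocol A) : Protocol A :=
  fun a b => Form.conj (P a b) (Form.K a P (Form.box (Prog.call a b) (oneStepBody A P)))

/-- Soft one-step strengthening: `P_ab ∧ K̂_a^P [ab](Ex ∨ ⋁_{i≠j}(N_ij ∧ P_ij))`. -/
noncomputable def softOneStep {A : Type} [Fintype A] [DecidableEq A] (P : Protocol A) : Protocol A :=
  fun a b => Form.conj (P a b) (hatK a P (Form.box (Prog.call a b) (oneStepBody A P)))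

/-- The protocol `P` as a program:
`(⋃_{a≠b} ?(N_ab ∧ P_ab);ab)* ; ?⋀_{a≠b} ¬(N_ab ∧ P_ab)`. -/
noncomputable def protProg (A : Type) [Fintype A] [DecidableEq A] (P : Protocol A) : Prog A :=
  Prog.seq
    (Prog.star (((distinctPairs A).map (fun c =>
      Prog.seq (Prog.test (Form.conj (Form.atomN c.1 c.2) (P c.1 c.2))) (Prog.call c.1 c.2))).foldr
        Prog.cup (Prog.test (Form.neg Form.top))))
    (Prog.test (listConj ((distinctPairs A).map (fun c =>
      Form.neg (Form.conj (Form.atomN c.1 c.2) (P c.1 c.2))))))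

/-- Hard look-ahead strengthening: `P_ab ∧ K_a^P [ab]⟨P⟩Ex`. -/
noncomputable def hardLookAhead {A : Type} [Fintype A] [DecidableEq A] (P : Protocol A) : Protocol A :=
  fun a b => Form.conj (P a b)
    (Form.K a P (Form.box (Prog.call a b)
      (Form.neg (Form.box (protProg A P) (Form.neg (ExForm A))))))

/-- Soft look-ahead strengthening: `P_ab ∧ K̂_a^P [ab]⟨P⟩Ex`. -/
noncomputable def softLookAhead {A : Type} [Fintype A] [DecidableEq A] (P : Protocol A) : Protocol A :=
  fun a b => Form.conj (P a b)
    (hatK a P (Form.box (Prog.call a b)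
      (Form.neg (Form.box (protProg A P) (Form.neg (ExForm A))))))

/-- Hard uniform backward defoliation of a semantic protocol. -/
def HUBD (Q : RawSem A) : RawSem A := fun G =>
  { σ | σ ∈ Q G ∧ (σ = [] ∨ ∃ τ : List (A × A), ∃ a b : A, σ = τ ++ [(a, b)] ∧
      ∀ τ', Epi G (semPerm Q G) a τ' τ →
        (τ' ++ [(a, b)] ∈ Q G ∧ TerminalIn Q G (τ' ++ [(a, b)])) →
          AllExpert (doCalls G (τ' ++ [(a, b)]))) }

/-- Soft uniform backward defoliation of a semantic protocol. -/
def SUBD (Q : RawSem A) : RawSem A := fun G =>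
  { σ | σ ∈ Q G ∧ (σ = [] ∨ ∃ τ : List (A × A), ∃ a b : A, σ = τ ++ [(a, b)] ∧
      ∃ τ', Epi G (semPerm Q G) a τ' τ ∧
        ((τ' ++ [(a, b)] ∈ Q G ∧ TerminalIn Q G (τ' ++ [(a, b)])) →
          AllExpert (doCalls G (τ' ++ [(a, b)])))) }

/-- The syntactic protocol LNS: `LNS_ab := ¬ S_ab`. -/
def LNSsyn (A : Type) : Protocol A := fun a b => Form.neg (Form.atomS a b)

/-- LNS-permitted: call `ab` permitted at `(G,σ)` iff `N^σ a b` and not `S^σ a b`. -/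
def LNSperm (G : GossipGraph A) (σ : List (A × A)) (c : A × A) : Prop :=
  c.1 ≠ c.2 ∧ (doCalls G σ).N c.1 c.2 ∧ ¬ (doCalls G σ).S c.1 c.2

/-- LNS as a semantic protocol. -/
def LNSsem : RawSem A := fun G => { σ | Ext G (LNSperm G) σ }

/-- A semantic protocol is strongly successful on `G` iff every terminal sequence makes
all agents experts. -/
def StronglySuccessfulOn (Q : RawSem A) (G : GossipGraph A) : Prop :=
  ∀ σ ∈ Q G, TerminalIn Q G σ → AllExpert (doCalls G σ)

/-- A semantic protocol is weakly successful on `G` iff some terminal sequence makes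
all agents experts. -/
def WeaklySuccessfulOn (Q : RawSem A) (G : GossipGraph A) : Prop :=
  ∃ σ ∈ Q G, TerminalIn Q G σ ∧ AllExpert (doCalls G σ)


/-- The "N" initial gossip graph on agents 0,1,2,3:
`N` is the reflexive closure of {(3,1),(3,0),(2,0)} and `S` is the identity. -/
def nGraph : GossipGraph (Fin 4) where
  N x y := x = y ∨ (x = 3 ∧ y = 1) ∨ (x = 3 ∧ y = 0) ∨ (x = 2 ∧ y = 0)
  S x y := x = y
  refl_S a := rfl
  S_sub_N a b h := Or.inl h

/-! ### Auxiliary development -/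

section Aux

variable {A : Type}

/-! #### Unfolding lemmas for `Sat` and `ProgRel` -/

lemma sat_top {G : GossipGraph A} {σ} : Sat G σ (Form.top) ↔ True := Iff.rfl
lemma sat_atomN {G : GossipGraph A} {σ a b} :
    Sat G σ (Form.atomN a b) ↔ (doCalls G σ).N a b := Iff.rfl
lemma sat_atomS {G : GossipGraph A} {σ a b} :
    Sat G σ (Form.atomS a b) ↔ (doCalls G σ).S a b := Iff.rfl
lemma sat_neg {G : GossipGraph A} {σ φ} : Sat G σ (Form.neg φ) ↔ ¬ Sat G σ φ := Iff.rfl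
lemma sat_conj {G : GossipGraph A} {σ φ ψ} :
    Sat G σ (Form.conj φ ψ) ↔ Sat G σ φ ∧ Sat G σ ψ := Iff.rfl
lemma sat_box {G : GossipGraph A} {σ π φ} :
    Sat G σ (Form.box π φ) ↔ ∀ τ, ProgRel G π σ τ → Sat G τ φ := Iff.rfl
lemma sat_K {G : GossipGraph A} {σ a P φ} :
    Sat G σ (Form.K a P φ) ↔ ∀ τ, Epi G (Permits G P) a τ σ → Sat G τ φ := Iff.rfl
lemma progRel_test {G : GossipGraph A} {φ σ τ} :
    ProgRel G (Prog.test φ) σ τ ↔ (σ = τ ∧ Sat G σ φ) := Iff.rfl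
lemma progRel_call {G : GossipGraph A} {a b σ τ} :
    ProgRel G (Prog.call a b) σ τ ↔ (a ≠ b ∧ (doCalls G σ).N a b ∧ τ = σ ++ [(a, b)]) := Iff.rfl
lemma progRel_seq {G : GossipGraph A} {π π' σ τ} :
    ProgRel G (Prog.seq π π') σ τ ↔ ∃ ρ, ProgRel G π σ ρ ∧ ProgRel G π' ρ τ := Iff.rfl
lemma progRel_cup {G : GossipGraph A} {π π' σ τ} :
    ProgRel G (Prog.cup π π') σ τ ↔ (ProgRel G π σ τ ∨ ProgRel G π' σ τ) := Iff.rfl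
lemma progRel_star {G : GossipGraph A} {π σ τ} :
    ProgRel G (Prog.star π) σ τ ↔
      Relation.ReflTransGen (fun x y => ProgRel G π x y) σ τ := Iff.rfl

lemma sat_listConj {G : GossipGraph A} {σ} {l : List (Form A)} :
    Sat G σ (listConj l) ↔ ∀ φ ∈ l, Sat G σ φ := by
  induction l with
  | nil =>
      constructor
      · intro _ φ hφ; simp at hφ
      · intro _; exact trivial
  | cons φ l ih =>
      have : listConj (φ :: l) = Form.conj φ (listConj l) := rfl
      rw [this, sat_conj, ih]
      simp

lemma mem_pairsList [Fintype A] (c : A × A) : c ∈ pairsList A := by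
  simp [pairsList, Finset.mem_toList]

lemma mem_distinctPairs [Fintype A] [DecidableEq A] (c : A × A) :
    c ∈ distinctPairs A ↔ c.1 ≠ c.2 := by
  simp [distinctPairs, List.mem_filter, mem_pairsList]

lemma sat_ExForm [Fintype A] {G : GossipGraph A} {σ} :
    Sat G σ (ExForm A) ↔ ∀ a b : A, (doCalls G σ).S a b := by
  rw [ExForm, sat_listConj]
  constructor
  · intro h a b
    exact (h _ (List.mem_map.2 ⟨(a, b), mem_pairsList _, rfl⟩) : Sat G σ (Form.atomS a b))
  · rintro h φ hφ
    rcases List.mem_map.1 hφ with ⟨c, -, rfl⟩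
    exact h c.1 c.2

/-! #### Characterising `protProg` -/

/-- One `P`-permitted step. -/
def PStep (G : GossipGraph A) (P : Protocol A) (σ τ : List (A × A)) : Prop :=
  ∃ c, Permits G P σ c ∧ τ = σ ++ [c]

lemma progRel_foldr_cup {G : GossipGraph A} (l : List (Prog A)) (z : Prog A) (σ τ) :
    ProgRel G (l.foldr Prog.cup z) σ τ ↔ ((∃ p ∈ l, ProgRel G p σ τ) ∨ ProgRel G z σ τ) := by
  induction l with
  | nil => simp
  | cons p l ih =>
      have : (p :: l).foldr Prog.cup z = Prog.cup p (l.foldr Prog.cup z) := rfl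
      rw [this, progRel_cup, ih]
      simp [or_assoc]

lemma step_iff [Fintype A] [DecidableEq A] {G : GossipGraph A} {P : Protocol A} {σ τ} :
    ProgRel G (((distinctPairs A).map (fun c =>
      Prog.seq (Prog.test (Form.conj (Form.atomN c.1 c.2) (P c.1 c.2))) (Prog.call c.1 c.2))).foldr
        Prog.cup (Prog.test (Form.neg Form.top))) σ τ ↔ PStep G P σ τ := by
  rw [progRel_foldr_cup]
  constructor
  · rintro (⟨p, hp, hrel⟩ | hz)
    · rcases List.mem_map.1 hp with ⟨c, -, rfl⟩
      rcases progRel_seq.1 hrel with ⟨ρ, ht, hc⟩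
      rcases progRel_test.1 ht with ⟨rfl, hsat⟩
      rcases progRel_call.1 hc with ⟨hne, -, rfl⟩
      rcases sat_conj.1 hsat with ⟨hN, hP⟩
      exact ⟨c, ⟨hne, sat_atomN.1 hN, hP⟩, rfl⟩
    · rcases progRel_test.1 hz with ⟨-, hsat⟩
      exact absurd trivial (sat_neg.1 hsat)
  · rintro ⟨c, ⟨hne, hN, hP⟩, rfl⟩
    left
    refine ⟨_, List.mem_map.2 ⟨c, (mem_distinctPairs c).2 hne, rfl⟩, ?_⟩
    exact progRel_seq.2 ⟨σ, progRel_test.2 ⟨rfl, sat_conj.2 ⟨sat_atomN.2 hN, hP⟩⟩,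
      progRel_call.2 ⟨hne, hN, rfl⟩⟩

lemma protProg_iff [Fintype A] [DecidableEq A] {G : GossipGraph A} {P : Protocol A} {σ τ} :
    ProgRel G (protProg A P) σ τ ↔
      (Relation.ReflTransGen (PStep G P) σ τ ∧ ∀ c, ¬ Permits G P τ c) := by
  rw [protProg, progRel_seq]
  constructor
  · rintro ⟨ρ, hstar, htest⟩
    rcases progRel_test.1 htest with ⟨rfl, hsat⟩
    constructor
    · exact Relation.ReflTransGen.mono (fun x y h => step_iff.1 h) _ _ (progRel_star.1 hstar)
    · rintro c ⟨hne, hN, hP⟩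
      have hmem : Form.neg (Form.conj (Form.atomN c.1 c.2) (P c.1 c.2)) ∈
          (distinctPairs A).map (fun c => Form.neg (Form.conj (Form.atomN c.1 c.2) (P c.1 c.2))) :=
        List.mem_map.2 ⟨c, (mem_distinctPairs c).2 hne, rfl⟩
      exact (sat_neg.1 (sat_listConj.1 hsat _ hmem)) (sat_conj.2 ⟨sat_atomN.2 hN, hP⟩)
  · rintro ⟨hstar, hterm⟩
    refine ⟨τ, progRel_star.2 (Relation.ReflTransGen.mono (fun x y h => step_iff.2 h) _ _ hstar), progRel_test.2 ⟨rfl, ?_⟩⟩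
    rw [sat_listConj]
    intro φ hφ
    rcases List.mem_map.1 hφ with ⟨c, hc, rfl⟩
    rw [sat_neg, sat_conj]
    rintro ⟨hN, hP⟩
    exact hterm c ⟨(mem_distinctPairs c).1 hc, sat_atomN.1 hN, hP⟩

end Aux
/-! #### A boolean model of LNS search on `Fin 4` -/

section BoolModel

abbrev BG := (Fin 4 → Fin 4 → Bool) × (Fin 4 → Fin 4 → Bool)

def allCalls : List (Fin 4 × Fin 4) :=
  (List.finRange 4).flatMap (fun a => (List.finRange 4).map (fun b => (a, b)))

lemma mem_allCalls (c : Fin 4 × Fin 4) : c ∈ allCalls := by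
  obtain ⟨a, b⟩ := c
  simp [allCalls]

def bCall (m : BG) (c : Fin 4 × Fin 4) : BG :=
  (fun x y => m.1 x y || ((x == c.1 || x == c.2) && (m.1 c.1 y || m.1 c.2 y)),
   fun x y => m.2 x y || ((x == c.1 || x == c.2) && (m.2 c.1 y || m.2 c.2 y)))

def bPerm (m : BG) (c : Fin 4 × Fin 4) : Bool := (c.1 != c.2) && m.1 c.1 c.2 && !(m.2 c.1 c.2)

def bEx (m : BG) : Bool := allCalls.all (fun c => m.2 c.1 c.2)
def bTerm (m : BG) : Bool := allCalls.all (fun c => !(bPerm m c))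

def bSucc : ℕ → BG → Bool
  | 0, _ => false
  | f+1, m => if bTerm m then bEx m else allCalls.any (fun c => bPerm m c && bSucc f (bCall m c))

def mInit : BG :=
  (fun a b => a == b || (a == 3 && (b == 1 || b == 0)) || (a == 2 && b == 0),
   fun a b => a == b)

/-- `m` represents the gossip graph `G`. -/
def Rep (G : GossipGraph (Fin 4)) (m : BG) : Prop :=
  (∀ a b, G.N a b ↔ m.1 a b = true) ∧ (∀ a b, G.S a b ↔ m.2 a b = true)

lemma rep_init : Rep nGraph mInit := by
  constructor <;> intro a b <;> fin_cases a <;> fin_cases b <;> simp [nGraph, mInit]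

lemma rep_doCall {G m} (h : Rep G m) (c) : Rep (doCall G c) (bCall m c) := by
  obtain ⟨hN, hS⟩ := h
  constructor <;> intro a b <;>
    simp [doCall, bCall, hN, hS, Bool.or_eq_true, Bool.and_eq_true, beq_iff_eq]

lemma doCalls_append {G : GossipGraph (Fin 4)} (σ : List (Fin 4 × Fin 4)) (c) :
    doCalls G (σ ++ [c]) = doCall (doCalls G σ) c := by
  simp [doCalls, List.foldl_append]

lemma rep_doCalls {G m} (h : Rep G m) (σ : List (Fin 4 × Fin 4)) :
    Rep (doCalls G σ) (σ.foldl bCall m) := by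
  induction σ generalizing G m with
  | nil => exact h
  | cons c σ ih => exact ih (rep_doCall h c)

lemma permits_lns_iff {G : GossipGraph (Fin 4)} {σ m} (h : Rep (doCalls G σ) m)
    (c : Fin 4 × Fin 4) :
    Permits G (LNSsyn (Fin 4)) σ c ↔ bPerm m c = true := by
  have : Permits G (LNSsyn (Fin 4)) σ c ↔
      (c.1 ≠ c.2 ∧ (doCalls G σ).N c.1 c.2 ∧ ¬ (doCalls G σ).S c.1 c.2) := Iff.rfl
  rw [this, h.1, h.2, bPerm]
  simp [Bool.and_eq_true, bne_iff_ne, Bool.not_eq_true']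
  tauto

def weight (m : BG) : ℕ :=
  (Finset.univ.filter (fun c : Fin 4 × Fin 4 => m.2 c.1 c.2 = true)).card

lemma weight_le (m : BG) : weight m ≤ 16 := by
  calc weight m ≤ (Finset.univ : Finset (Fin 4 × Fin 4)).card := Finset.card_filter_le _ _
  _ = 16 := by simp

lemma weight_lt {G m} (h : Rep G m) {c} (hp : bPerm m c = true) :
    weight m < weight (bCall m c) := by
  apply Finset.card_lt_card
  rw [Finset.ssubset_iff_of_subset]
  · refine ⟨c, ?_, ?_⟩
    · simp only [Finset.mem_filter, Finset.mem_univ, true_and, bCall]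
      have hrefl : m.2 c.2 c.2 = true := (h.2 c.2 c.2).1 (G.refl_S c.2)
      simp [hrefl]
    · simp only [Finset.mem_filter, Finset.mem_univ, true_and]
      simp [bPerm, Bool.and_eq_true, Bool.not_eq_true'] at hp
      simp [hp.2]
  · intro x hx
    simp only [Finset.mem_filter, Finset.mem_univ, true_and, bCall] at hx ⊢
    simp [hx]

lemma bSucc_complete {G : GossipGraph (Fin 4)} :
    ∀ (f : ℕ) (σ : List (Fin 4 × Fin 4)) (m : BG), Rep (doCalls G σ) m →
      16 < f + weight m → bSucc f m = false →
      ∀ τ, Relation.ReflTransGen (PStep G (LNSsyn (Fin 4))) σ τ →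
        (∀ c, ¬ Permits G (LNSsyn (Fin 4)) τ c) → ¬ Sat G τ (ExForm (Fin 4)) := by
  intro f
  induction f with
  | zero =>
      intro σ m _ hw
      have := weight_le m
      omega
  | succ f ih =>
      intro σ m hrep hw hfalse τ hstar hterm hEx
      rcases (Relation.ReflTransGen.cases_head hstar) with rfl | ⟨σ', hstep, hrest⟩
      · have hbt : bTerm m = true := by
          rw [bTerm, List.all_eq_true]
          intro c _
          rw [Bool.not_eq_true']
          by_contra hne
          rw [Bool.not_eq_false] at hne
          exact hterm c ((permits_lns_iff hrep c).2 hne)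
        have hbe : bEx m = false := by
          rw [bSucc, hbt] at hfalse
          simpa using hfalse
        have hAll := sat_ExForm.1 hEx
        have : bEx m = true := by
          rw [bEx, List.all_eq_true]
          intro c _
          exact (hrep.2 c.1 c.2).1 (hAll c.1 c.2)
        rw [this] at hbe
        simp at hbe
      · obtain ⟨c, hperm, rfl⟩ := hstep
        have hp : bPerm m c = true := (permits_lns_iff hrep c).1 hperm
        have hbt : bTerm m = false := by
          rw [Bool.eq_false_iff]
          intro hT
          rw [bTerm, List.all_eq_true] at hT
          have := hT c (mem_allCalls c)
          rw [hp] at this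
          simp at this
        have hnext : bSucc f (bCall m c) = false := by
          rw [bSucc, hbt] at hfalse
          simp only [Bool.false_eq_true, if_false, List.any_eq_false] at hfalse
          have h2 := hfalse c (mem_allCalls c)
          rw [hp] at h2
          simpa using h2
        exact ih (σ ++ [c]) (bCall m c)
          (by rw [doCalls_append]; exact rep_doCall hrep c)
          (by have := weight_lt hrep hp; omega) hnext τ hrest hterm hEx

end BoolModel
/-! #### Epi at the empty sequence, bridge lemmas, and the successful run -/

lemma epi_nil_aux {G : GossipGraph A} {perm : List (A × A) → (A × A) → Prop} {a τ σ}
    (h : Epi G perm a τ σ) : σ = [] → τ = [] := by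
  cases h with
  | refl => intro; rfl
  | call_out _ _ _ _ _ => intro h'; exact absurd h' (by simp)
  | call_in _ _ _ _ _ => intro h'; exact absurd h' (by simp)
  | other _ _ _ _ _ _ _ => intro h'; exact absurd h' (by simp)

lemma epi_nil {G : GossipGraph A} {perm : List (A × A) → (A × A) → Prop} {a τ}
    (h : Epi G perm a τ []) : τ = [] := epi_nil_aux h rfl

lemma sat_K_nil {G : GossipGraph A} {P : Protocol A} {a φ} :
    Sat G [] (Form.K a P φ) ↔ Sat G [] φ := by
  rw [sat_K]
  constructor
  · intro h; exact h [] Epi.refl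
  · intro h τ hepi; rw [epi_nil hepi]; exact h

/-- If the boolean search fails, no `LNS`-run from `σ` ends with all agents experts. -/
lemma no_lns_success {σ : List (Fin 4 × Fin 4)}
    (h : bSucc 17 (σ.foldl bCall mInit) = false) :
    Sat nGraph σ (Form.box (protProg (Fin 4) (LNSsyn (Fin 4))) (Form.neg (ExForm (Fin 4)))) := by
  rw [sat_box]
  intro τ hpr
  rw [protProg_iff] at hpr
  rw [sat_neg]
  exact bSucc_complete 17 σ _ (rep_doCalls rep_init σ) (by omega) h τ hpr.1 hpr.2

lemma mk_lns_permit {σ : List (Fin 4 × Fin 4)} {c : Fin 4 × Fin 4} (h1 : c.1 ≠ c.2)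
    (h2 : (doCalls nGraph σ).N c.1 c.2) (h3 : ¬ (doCalls nGraph σ).S c.1 c.2) :
    Permits nGraph (LNSsyn (Fin 4)) σ c := ⟨h1, h2, h3⟩

/-- The successful LNS run extending 30. -/
def run30 : List (Fin 4 × Fin 4) := [(3,0),(2,0),(0,1),(3,1),(2,1)]

lemma run30_chain :
    Relation.ReflTransGen (PStep nGraph (LNSsyn (Fin 4))) [((3:Fin 4),(0:Fin 4))] run30 := by
  have s1 : PStep nGraph (LNSsyn (Fin 4)) [(3,0)] [(3,0),(2,0)] :=
    ⟨(2,0), mk_lns_permit (by decide) (by simp [doCalls, doCall, nGraph])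
      (by simp [doCalls, doCall, nGraph]), rfl⟩
  have s2 : PStep nGraph (LNSsyn (Fin 4)) [(3,0),(2,0)] [(3,0),(2,0),(0,1)] :=
    ⟨(0,1), mk_lns_permit (by decide) (by simp [doCalls, doCall, nGraph])
      (by simp [doCalls, doCall, nGraph]), rfl⟩
  have s3 : PStep nGraph (LNSsyn (Fin 4)) [(3,0),(2,0),(0,1)] [(3,0),(2,0),(0,1),(3,1)] :=
    ⟨(3,1), mk_lns_permit (by decide) (by simp [doCalls, doCall, nGraph])
      (by simp [doCalls, doCall, nGraph]), rfl⟩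
  have s4 : PStep nGraph (LNSsyn (Fin 4)) [(3,0),(2,0),(0,1),(3,1)] run30 :=
    ⟨(2,1), mk_lns_permit (by decide) (by simp [doCalls, doCall, nGraph])
      (by simp [doCalls, doCall, nGraph]), rfl⟩
  exact .head s1 (.head s2 (.head s3 (.head s4 .refl)))

lemma run30_allS : ∀ a b : Fin 4, (doCalls nGraph run30).S a b := by
  intro a b
  fin_cases a <;> fin_cases b <;> simp [run30, doCalls, doCall, nGraph]

lemma run30_term : ∀ c, ¬ Permits nGraph (LNSsyn (Fin 4)) run30 c := by
  intro c h
  exact (h.2.2 : ¬ (doCalls nGraph run30).S c.1 c.2) (run30_allS c.1 c.2)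

/-- After call 30, LNS can reach a state where all agents are experts. -/
lemma succ30 :
    Sat nGraph [((3:Fin 4),(0:Fin 4))]
      (Form.neg (Form.box (protProg (Fin 4) (LNSsyn (Fin 4))) (Form.neg (ExForm (Fin 4))))) := by
  rw [sat_neg]
  intro hbox
  have h := sat_box.1 hbox run30 (protProg_iff.2 ⟨run30_chain, run30_term⟩)
  exact (sat_neg.1 h) (sat_ExForm.2 run30_allS)
/-! #### Permissions of the strengthened protocols on the N graph -/

lemma noPerm31 : ¬ Permits nGraph (hardLookAhead (LNSsyn (Fin 4))) [] ((3:Fin 4),(1:Fin 4)) := by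
  intro h
  have hK : Sat nGraph [] (Form.K 3 (LNSsyn (Fin 4)) (Form.box (Prog.call 3 1)
      (Form.neg (Form.box (protProg (Fin 4) (LNSsyn (Fin 4))) (Form.neg (ExForm (Fin 4))))))) :=
    (h.2.2).2
  have h31 := sat_box.1 (sat_K_nil.1 hK) [((3:Fin 4),(1:Fin 4))]
    ⟨by decide, by simp [doCalls, nGraph], rfl⟩
  exact (sat_neg.1 h31) (no_lns_success (by decide))

lemma noPerm20 : ¬ Permits nGraph (hardLookAhead (LNSsyn (Fin 4))) [] ((2:Fin 4),(0:Fin 4)) := by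
  intro h
  have hK : Sat nGraph [] (Form.K 2 (LNSsyn (Fin 4)) (Form.box (Prog.call 2 0)
      (Form.neg (Form.box (protProg (Fin 4) (LNSsyn (Fin 4))) (Form.neg (ExForm (Fin 4))))))) :=
    (h.2.2).2
  have h20 := sat_box.1 (sat_K_nil.1 hK) [((2:Fin 4),(0:Fin 4))]
    ⟨by decide, by simp [doCalls, nGraph], rfl⟩
  exact (sat_neg.1 h20) (no_lns_success (by decide))

lemma onlyThirty (c : Fin 4 × Fin 4)
    (h : Permits nGraph (hardLookAhead (LNSsyn (Fin 4))) [] c) : c = ((3:Fin 4),(0:Fin 4)) := by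
  have hne := h.1
  have hN : (doCalls nGraph []).N c.1 c.2 := h.2.1
  fin_cases c <;>
    first
      | rfl
      | exact absurd rfl hne
      | (revert hN; simp [doCalls, nGraph]; done)
      | exact absurd h noPerm31
      | exact absurd h noPerm20

lemma p30e : Permits nGraph (LNSsyn (Fin 4)) [] ((3:Fin 4),(0:Fin 4)) :=
  mk_lns_permit (by decide) (by simp [doCalls, nGraph]) (by simp [doCalls, nGraph])

lemma p31e : Permits nGraph (LNSsyn (Fin 4)) [] ((3:Fin 4),(1:Fin 4)) :=
  mk_lns_permit (by decide) (by simp [doCalls, nGraph]) (by simp [doCalls, nGraph])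

lemma epi30_3 : Epi nGraph (Permits nGraph (LNSsyn (Fin 4))) 3
    [((3:Fin 4),(0:Fin 4))] [((3:Fin 4),(0:Fin 4))] :=
  Epi.call_out Epi.refl (fun _ => Iff.rfl) (fun _ => Iff.rfl) p30e p30e

lemma epi30_0 : Epi nGraph (Permits nGraph (LNSsyn (Fin 4))) 0
    [((3:Fin 4),(0:Fin 4))] [((3:Fin 4),(0:Fin 4))] :=
  Epi.call_in Epi.refl (fun _ => Iff.rfl) (fun _ => Iff.rfl) p30e p30e

lemma epi30_2 : Epi nGraph (Permits nGraph (LNSsyn (Fin 4))) 2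
    [((3:Fin 4),(1:Fin 4))] [((3:Fin 4),(0:Fin 4))] :=
  Epi.other Epi.refl (by decide) (by decide) (by decide) (by decide) p31e p30e

lemma noPermP1at30 (c : Fin 4 × Fin 4) :
    ¬ Permits nGraph (hardLookAhead (LNSsyn (Fin 4))) [((3:Fin 4),(0:Fin 4))] c := by
  intro h
  have hne := h.1
  have hN : (doCalls nGraph [((3:Fin 4),(0:Fin 4))]).N c.1 c.2 := h.2.1
  have hS : ¬ (doCalls nGraph [((3:Fin 4),(0:Fin 4))]).S c.1 c.2 := (h.2.2).1
  have hK : Sat nGraph [((3:Fin 4),(0:Fin 4))] (Form.K c.1 (LNSsyn (Fin 4))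
      (Form.box (Prog.call c.1 c.2)
      (Form.neg (Form.box (protProg (Fin 4) (LNSsyn (Fin 4))) (Form.neg (ExForm (Fin 4))))))) :=
    (h.2.2).2
  have hcases : c = ((3:Fin 4),(1:Fin 4)) ∨ c = ((0:Fin 4),(1:Fin 4)) ∨ c = ((2:Fin 4),(0:Fin 4)) := by
    clear hK
    fin_cases c <;>
      first
        | exact Or.inl rfl
        | exact Or.inr (Or.inl rfl)
        | exact Or.inr (Or.inr rfl)
        | exact absurd rfl hne
        | (revert hN; simp [doCalls, doCall, nGraph]; done)
        | exact absurd (by simp [doCalls, doCall, nGraph]) hS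
  rcases hcases with rfl | rfl | rfl
  · exact (sat_neg.1 (sat_box.1 (sat_K.1 hK [((3:Fin 4),(0:Fin 4))] epi30_3)
      [(3,0),(3,1)] ⟨by decide, by simp [doCalls, doCall, nGraph], rfl⟩))
      (no_lns_success (by decide))
  · exact (sat_neg.1 (sat_box.1 (sat_K.1 hK [((3:Fin 4),(0:Fin 4))] epi30_0)
      [(3,0),(0,1)] ⟨by decide, by simp [doCalls, doCall, nGraph], rfl⟩))
      (no_lns_success (by decide))
  · exact (sat_neg.1 (sat_box.1 (sat_K.1 hK [((3:Fin 4),(1:Fin 4))] epi30_2)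
      [(3,1),(2,0)] ⟨by decide, by simp [doCalls, doCall, nGraph], rfl⟩))
      (no_lns_success (by decide))

lemma perm30P1 : Permits nGraph (hardLookAhead (LNSsyn (Fin 4))) [] ((3:Fin 4),(0:Fin 4)) := by
  refine ⟨by decide, by simp [doCalls, nGraph], ?_, ?_⟩
  · exact (by simp [doCalls, nGraph] : ¬ (doCalls nGraph []).S 3 0)
  · refine sat_K_nil.2 (sat_box.2 ?_)
    rintro τ ⟨-, -, rfl⟩
    exact succ30

lemma noPermP2 (c : Fin 4 × Fin 4) :
    ¬ Permits nGraph (hardLookAhead (hardLookAhead (LNSsyn (Fin 4)))) [] c := by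
  intro h
  have hP1 : Permits nGraph (hardLookAhead (LNSsyn (Fin 4))) [] c := ⟨h.1, h.2.1, (h.2.2).1⟩
  have hc := onlyThirty c hP1
  subst hc
  have hK : Sat nGraph [] (Form.K 3 (hardLookAhead (LNSsyn (Fin 4))) (Form.box (Prog.call 3 0)
      (Form.neg (Form.box (protProg (Fin 4) (hardLookAhead (LNSsyn (Fin 4))))
        (Form.neg (ExForm (Fin 4))))))) := (h.2.2).2
  have hneg := sat_box.1 (sat_K_nil.1 hK) [((3:Fin 4),(0:Fin 4))]
    ⟨by decide, by simp [doCalls, nGraph], rfl⟩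
  refine (sat_neg.1 hneg) (sat_box.2 ?_)
  intro τ hpr
  rw [protProg_iff] at hpr
  have hτ : τ = [((3:Fin 4),(0:Fin 4))] := by
    rcases Relation.ReflTransGen.cases_head hpr.1 with h' | ⟨σ', hstep, -⟩
    · exact h'.symm
    · obtain ⟨c', hperm, -⟩ := hstep
      exact absurd hperm (noPermP1at30 c')
  subst hτ
  rw [sat_neg, sat_ExForm]
  intro hAll
  have h10 := hAll 1 0
  simp [doCalls, doCall, nGraph] at h10

/-! #### The extensions -/

lemma extP1 : extension (hardLookAhead (LNSsyn (Fin 4))) nGraph =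
    ({[], [((3:Fin 4),(0:Fin 4))]} : Set (List (Fin 4 × Fin 4))) := by
  ext σ
  simp only [Set.mem_insert_iff, Set.mem_singleton_iff]
  constructor
  · intro h
    have h' : Ext nGraph (Permits nGraph (hardLookAhead (LNSsyn (Fin 4)))) σ := h
    clear h
    induction h' with
    | nil => exact Or.inl rfl
    | @snoc σ c hext hperm ih =>
        rcases ih with rfl | rfl
        · have := onlyThirty c hperm; subst this; exact Or.inr rfl
        · exact absurd hperm (noPermP1at30 c)
  · rintro (rfl | rfl)
    · exact Ext.nil
    · exact Ext.snoc Ext.nil perm30P1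

lemma extP2 : extension (hardLookAhead (hardLookAhead (LNSsyn (Fin 4)))) nGraph =
    ({[]} : Set (List (Fin 4 × Fin 4))) := by
  ext σ
  simp only [Set.mem_singleton_iff]
  constructor
  · intro h
    have h' : Ext nGraph (Permits nGraph (hardLookAhead (hardLookAhead (LNSsyn (Fin 4))))) σ := h
    clear h
    induction h' with
    | nil => rfl
    | @snoc σ c hext hperm ih =>
        subst ih
        exact absurd hperm (noPermP2 c)
  · rintro rfl
    exact Ext.nil
/-- Hard look-ahead strengthening is not idempotent: on the "N" graph,
`LNS^■(G) = {ε, 30}` while `(LNS^■)^■(G) = {ε}`. -/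
theorem hard_lookahead_not_idempotent :
    Initial nGraph ∧
    ([((3 : Fin 4), (0 : Fin 4))] ∈ extension (hardLookAhead (LNSsyn (Fin 4))) nGraph) ∧
    ([((3 : Fin 4), (0 : Fin 4))] ∉
      extension (hardLookAhead (hardLookAhead (LNSsyn (Fin 4)))) nGraph) ∧
    extension (hardLookAhead (LNSsyn (Fin 4))) nGraph =
      ({[], [((3 : Fin 4), (0 : Fin 4))]} : Set (List (Fin 4 × Fin 4))) ∧
    extension (hardLookAhead (hardLookAhead (LNSsyn (Fin 4)))) nGraph =
      ({[]} : Set (List (Fin 4 × Fin 4))) ∧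
    extension (hardLookAhead (LNSsyn (Fin 4))) nGraph ≠
      extension (hardLookAhead (hardLookAhead (LNSsyn (Fin 4)))) nGraph := by
  have m2 : [((3 : Fin 4), (0 : Fin 4))] ∈ extension (hardLookAhead (LNSsyn (Fin 4))) nGraph :=
    Ext.snoc Ext.nil perm30P1
  have m3 : [((3 : Fin 4), (0 : Fin 4))] ∉
      extension (hardLookAhead (hardLookAhead (LNSsyn (Fin 4)))) nGraph := by
    intro h
    rw [extP2] at h
    simp at h
  exact ⟨fun a b => Iff.rfl, m2, m3, extP1, extP2, fun h => m3 (h ▸ m2)⟩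

end Gossip
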